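/- Let A, B, C, D be ±1 circulant matrices of order t satisfying AA^T + BB^T + CC^T + DD^T = 4tI and AB^T + CD^T = BA^T + DC^T (quasi-Williamson matrices). Then the 4t × 4t block matrix [[A, B, C, D], [-B, A, -D, C], [-C^T, D^T, A^T, -B^T], [-D^T, -C^T, B^T, A^T]] is a Hadamard matrix. -/

import Mathlib

def cycShift (t : ℕ) : Matrix (Fin t) (Fin t) ℤ :=
  Matrix.of fun i j => if (i : ℕ) + 1 = (j : ℕ) then 1
    else if (i : ℕ) = t - 1 ∧ (j : ℕ) = 0 then 1 else 0

def IsCirculant {t : ℕ} (A : Matrix (Fin t) (Fin t) ℤ) : Prop :=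
  ∃ c : ℕ → ℤ, A = ∑ i ∈ Finset.range t, c i • (cycShift t) ^ i

def qwArray {t : ℕ} (A B C D : Matrix (Fin t) (Fin t) ℤ) :
    Matrix ((Fin t ⊕ Fin t) ⊕ (Fin t ⊕ Fin t)) ((Fin t ⊕ Fin t) ⊕ (Fin t ⊕ Fin t)) ℤ :=
  Matrix.fromBlocks
    (Matrix.fromBlocks A B (-B) A)
    (Matrix.fromBlocks C D (-D) C)
    (Matrix.fromBlocks (-C.transpose) D.transpose (-D.transpose) (-C.transpose))
    (Matrix.fromBlocks A.transpose (-B.transpose) B.transpose A.transpose)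

lemma cycShift_eq_perm (n : ℕ) :
    cycShift (n + 1) = ((finRotate (n+1)).toPEquiv).toMatrix := by
  ext i j
  simp only [cycShift, Matrix.of_apply, PEquiv.toMatrix_apply, Equiv.toPEquiv_apply,
    Option.mem_def, Option.some_inj, finRotate_succ_apply]
  rcases eq_or_ne (i : ℕ) n with h | h
  · have hi : i = Fin.last n := Fin.ext h
    subst hi
    have : (Fin.last n) + 1 = 0 := by rw [Fin.last_add_one]
    rw [this]
    simp only [Fin.ext_iff, Fin.val_last, Fin.val_zero]
    split_ifs <;> omega
  · have hlt : (i : ℕ) < n := lt_of_le_of_ne (Nat.lt_succ_iff.mp i.isLt) h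
    have : ((i + 1 : Fin (n+1)) : ℕ) = (i : ℕ) + 1 := by
      rw [Fin.val_add_one_of_lt]
      exact Fin.lt_iff_val_lt_val.mpr (by simp [Fin.last]; omega)
    simp only [Fin.ext_iff, this]
    split_ifs <;> omega

lemma cycShift_commute_transpose (t : ℕ) :
    Commute (cycShift t) (cycShift t).transpose := by
  cases t with
  | zero => exact Subsingleton.elim _ _
  | succ n =>
    rw [cycShift_eq_perm]
    unfold Commute SemiconjBy
    rw [← PEquiv.toMatrix_symm, ← PEquiv.toMatrix_trans, ← PEquiv.toMatrix_trans,
      ← Equiv.toPEquiv_symm, ← Equiv.toPEquiv_trans, ← Equiv.toPEquiv_trans]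
    simp

lemma circ_commute {t : ℕ} {X Y : Matrix (Fin t) (Fin t) ℤ}
    (hX : IsCirculant X) (hY : IsCirculant Y) : Commute X Y := by
  obtain ⟨c, rfl⟩ := hX
  obtain ⟨d, rfl⟩ := hY
  refine Commute.sum_left _ _ _ fun i _ => Commute.sum_right _ _ _ fun j _ => ?_
  exact (((Commute.refl (cycShift t)).pow_pow i j).smul_left (c i)).smul_right (d j)

lemma circ_commute_t {t : ℕ} {X Y : Matrix (Fin t) (Fin t) ℤ}
    (hX : IsCirculant X) (hY : IsCirculant Y) : Commute X Y.transpose := by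
  obtain ⟨c, rfl⟩ := hX
  obtain ⟨d, rfl⟩ := hY
  rw [Matrix.transpose_sum]
  refine Commute.sum_left _ _ _ fun i _ => Commute.sum_right _ _ _ fun j _ => ?_
  rw [Matrix.transpose_smul, Matrix.transpose_pow]
  exact (((cycShift_commute_transpose t).pow_pow i j).smul_left (c i)).smul_right (d j)

theorem quasi_williamson_gives_hadamard (t : ℕ)
    (A B C D : Matrix (Fin t) (Fin t) ℤ)
    (hAc : IsCirculant A) (hBc : IsCirculant B) (hCc : IsCirculant C) (hDc : IsCirculant D)
    (hAe : ∀ i j, A i j = 1 ∨ A i j = -1) (hBe : ∀ i j, B i j = 1 ∨ B i j = -1)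
    (hCe : ∀ i j, C i j = 1 ∨ C i j = -1) (hDe : ∀ i j, D i j = 1 ∨ D i j = -1)
    (hsum : A * A.transpose + B * B.transpose + C * C.transpose + D * D.transpose =
      ((4 * t : ℕ) : ℤ) • (1 : Matrix (Fin t) (Fin t) ℤ))
    (hcross : A * B.transpose + C * D.transpose = B * A.transpose + D * C.transpose) :
    (∀ i j, qwArray A B C D i j = 1 ∨ qwArray A B C D i j = -1) ∧
    qwArray A B C D * (qwArray A B C D).transpose =
      ((4 * t : ℕ) : ℤ) • (1 : Matrix ((Fin t ⊕ Fin t) ⊕ (Fin t ⊕ Fin t))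
        ((Fin t ⊕ Fin t) ⊕ (Fin t ⊕ Fin t)) ℤ) := by
  constructor
  · intro i j
    rcases i with (i|i)|(i|i) <;> rcases j with (j|j)|(j|j) <;>
      simp only [qwArray, Matrix.fromBlocks, Matrix.of_apply, Sum.elim_inl, Sum.elim_inr,
        Matrix.neg_apply, Matrix.transpose_apply] <;>
      first
      | exact hAe _ _ | exact hBe _ _ | exact hCe _ _ | exact hDe _ _
      | (rcases hAe i j with h|h <;> omega) | (rcases hAe j i with h|h <;> omega)
      | (rcases hBe i j with h|h <;> omega) | (rcases hBe j i with h|h <;> omega)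
      | (rcases hCe i j with h|h <;> omega) | (rcases hCe j i with h|h <;> omega)
      | (rcases hDe i j with h|h <;> omega) | (rcases hDe j i with h|h <;> omega)
  · have cBA : B * A = A * B := (circ_commute hBc hAc).eq
    have cCA : C * A = A * C := (circ_commute hCc hAc).eq
    have cDA : D * A = A * D := (circ_commute hDc hAc).eq
    have cCB : C * B = B * C := (circ_commute hCc hBc).eq
    have cDB : D * B = B * D := (circ_commute hDc hBc).eq
    have cDC : D * C = C * D := (circ_commute hDc hCc).eq
    have tAA : A.transpose * A = A * A.transpose := ((circ_commute_t hAc hAc).eq).symm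
    have tBB : B.transpose * B = B * B.transpose := ((circ_commute_t hBc hBc).eq).symm
    have tCC : C.transpose * C = C * C.transpose := ((circ_commute_t hCc hCc).eq).symm
    have tDD : D.transpose * D = D * D.transpose := ((circ_commute_t hDc hDc).eq).symm
    have tAB : A.transpose * B = B * A.transpose := ((circ_commute_t hBc hAc).eq).symm
    have tBA : B.transpose * A = A * B.transpose := ((circ_commute_t hAc hBc).eq).symm
    have tCD : C.transpose * D = D * C.transpose := ((circ_commute_t hDc hCc).eq).symm
    have tDC : D.transpose * C = C * D.transpose := ((circ_commute_t hCc hDc).eq).symm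
    have ttBA : B.transpose * A.transpose = A.transpose * B.transpose := by
      rw [← Matrix.transpose_mul, ← Matrix.transpose_mul, cBA]
    have ttCA : C.transpose * A.transpose = A.transpose * C.transpose := by
      rw [← Matrix.transpose_mul, ← Matrix.transpose_mul, cCA]
    have ttDA : D.transpose * A.transpose = A.transpose * D.transpose := by
      rw [← Matrix.transpose_mul, ← Matrix.transpose_mul, cDA]
    have ttCB : C.transpose * B.transpose = B.transpose * C.transpose := by
      rw [← Matrix.transpose_mul, ← Matrix.transpose_mul, cCB]
    have ttDB : D.transpose * B.transpose = B.transpose * D.transpose := by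
      rw [← Matrix.transpose_mul, ← Matrix.transpose_mul, cDB]
    have ttDC : D.transpose * C.transpose = C.transpose * D.transpose := by
      rw [← Matrix.transpose_mul, ← Matrix.transpose_mul, cDC]
    have hone : ((4 * t : ℕ) : ℤ) • (1 : Matrix ((Fin t ⊕ Fin t) ⊕ (Fin t ⊕ Fin t))
        ((Fin t ⊕ Fin t) ⊕ (Fin t ⊕ Fin t)) ℤ) =
        Matrix.fromBlocks
          (Matrix.fromBlocks (((4 * t : ℕ) : ℤ) • 1) 0 0 (((4 * t : ℕ) : ℤ) • 1))
          (Matrix.fromBlocks 0 0 0 0) (Matrix.fromBlocks 0 0 0 0)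
          (Matrix.fromBlocks (((4 * t : ℕ) : ℤ) • 1) 0 0 (((4 * t : ℕ) : ℤ) • 1)) := by
      rw [Matrix.fromBlocks_zero,
        ← Matrix.fromBlocks_one (l := Fin t ⊕ Fin t) (m := Fin t ⊕ Fin t)]
      rw [← Matrix.fromBlocks_one (l := Fin t) (m := Fin t)]
      simp only [Matrix.fromBlocks_smul, smul_zero]
    rw [hone]
    simp only [qwArray, Matrix.fromBlocks_transpose, Matrix.transpose_neg,
      Matrix.transpose_transpose, Matrix.fromBlocks_multiply, Matrix.fromBlocks_add,
      Matrix.fromBlocks_inj]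
    refine ⟨⟨?_, ?_, ?_, ?_⟩, ⟨?_, ?_, ?_, ?_⟩, ⟨?_, ?_, ?_, ?_⟩, ⟨?_, ?_, ?_, ?_⟩⟩ <;>
      (try simp only [neg_one_smul, Matrix.neg_mul, Matrix.mul_neg, neg_neg, cBA, cCA, cDA, cCB, cDB, cDC,
        tAA, tBB, tCC, tDD, tAB, tBA, tCD, tDC, ttBA, ttCA, ttDA, ttCB, ttDB, ttDC]) <;>
      first
      | abel1
      | linear_combination (norm := abel1) hsum
      | linear_combination (norm := abel1) hcross
      | linear_combination (norm := abel1) -hcross
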